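/- Along a trajectory s_t of the ODE ds_t(θ)/dt = f_θ(s_t) with s_t(θ) > 0 for all θ, setting y_t(θ) = log s_t(θ), the derivative of the Lyapunov function satisfies d/dt V(y_t) = −Σ_θ (1/s_t(θ))·(∂V(y_t)/∂y(θ))², where ∂V/∂y(θ) = Σ_γ λφ_γα_γ(θ)e^{y(θ)}v_γ(θ)/(ε_γ + Σ_{θ'}α_γ(θ')e^{y(θ')}v_γ(θ')) − τ(θ)ρ(θ) + τ(θ)e^{y(θ)}. In particular, d/dt V(y_t) ≤ 0, with equality iff ∂V(y_t)/∂y(θ) = 0 for all θ. -/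

import Mathlib

open Finset Real

variable {Θ Γ : Type*} [Fintype Θ] [Fintype Γ]

noncomputable def V (lam : ℝ) (φ ε : Γ → ℝ) (α v : Γ → Θ → ℝ) (τ ρ : Θ → ℝ)
    (y : Θ → ℝ) : ℝ :=
  lam * ∑ γ : Γ, φ γ * Real.log (ε γ + ∑ θ : Θ, α γ θ * Real.exp (y θ) * v γ θ)
    - ∑ θ : Θ, τ θ * ρ θ * y θ + ∑ θ : Θ, τ θ * Real.exp (y θ)

/-- The partial derivative ∂V/∂y(θ). -/
noncomputable def Vgrad (lam : ℝ) (φ ε : Γ → ℝ) (α v : Γ → Θ → ℝ) (τ ρ : Θ → ℝ)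
    (y : Θ → ℝ) (θ : Θ) : ℝ :=
  ∑ γ : Γ, lam * φ γ * α γ θ * Real.exp (y θ) * v γ θ /
      (ε γ + ∑ θ' : Θ, α γ θ' * Real.exp (y θ') * v γ θ')
    - τ θ * ρ θ + τ θ * Real.exp (y θ)

noncomputable def odeF (lam : ℝ) (φ ε : Γ → ℝ) (α v : Γ → Θ → ℝ) (τ ρ : Θ → ℝ)
    (s : Θ → ℝ) (θ : Θ) : ℝ :=
  (ρ θ - s θ) * τ θ
    - lam * ∑ γ : Γ, φ γ * (α γ θ * v γ θ * s θ /
        (ε γ + ∑ θ' : Θ, α γ θ' * s θ' * v γ θ'))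

theorem lyapunov_derivative (lam : ℝ) (φ ε : Γ → ℝ) (α v : Γ → Θ → ℝ) (τ ρ : Θ → ℝ)
    (hlam : 0 < lam) (hφ : ∀ γ, 0 < φ γ) (hε : ∀ γ, 0 < ε γ)
    (hα : ∀ γ θ, 0 < α γ θ) (hv : ∀ γ θ, 0 < v γ θ)
    (hτ : ∀ θ, 0 < τ θ) (hρ : ∀ θ, 0 < ρ θ)
    (s : ℝ → Θ → ℝ) (t : ℝ)
    (hpos : ∀ u : ℝ, ∀ θ, 0 < s u θ)
    (hderiv : ∀ u : ℝ, HasDerivAt s (fun θ => odeF lam φ ε α v τ ρ (s u) θ) u) :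
    HasDerivAt (fun u : ℝ => V lam φ ε α v τ ρ (fun θ => Real.log (s u θ)))
      (-∑ θ : Θ, (1 / s t θ) *
        (Vgrad lam φ ε α v τ ρ (fun θ' => Real.log (s t θ')) θ) ^ 2) t ∧
    (-∑ θ : Θ, (1 / s t θ) *
        (Vgrad lam φ ε α v τ ρ (fun θ' => Real.log (s t θ')) θ) ^ 2) ≤ 0 ∧
    ((-∑ θ : Θ, (1 / s t θ) *
        (Vgrad lam φ ε α v τ ρ (fun θ' => Real.log (s t θ')) θ) ^ 2) = 0 ↔
      ∀ θ, Vgrad lam φ ε α v τ ρ (fun θ' => Real.log (s t θ')) θ = 0) := by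
  have hexp : ∀ (u : ℝ) (θ : Θ), Real.exp (Real.log (s u θ)) = s u θ :=
    fun u θ => Real.exp_log (hpos u θ)
  set s' : Θ → ℝ := fun θ => odeF lam φ ε α v τ ρ (s t) θ with hs'def
  set g : Θ → ℝ := fun θ => Vgrad lam φ ε α v τ ρ (fun θ' => Real.log (s t θ')) θ with hgdef
  have hs' : ∀ θ, HasDerivAt (fun u => s u θ) (s' θ) t := fun θ =>
    (hasDerivAt_pi.mp (hderiv t)) θ
  have hden : ∀ γ, 0 < ε γ + ∑ θ : Θ, α γ θ * s t θ * v γ θ := fun γ =>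
    add_pos_of_pos_of_nonneg (hε γ) (Finset.sum_nonneg fun θ _ =>
      mul_nonneg (mul_nonneg (hα γ θ).le (hpos t θ).le) (hv γ θ).le)
  -- the explicit form of g
  have hg : ∀ θ, g θ =
      (∑ γ : Γ, lam * φ γ * α γ θ * s t θ * v γ θ /
        (ε γ + ∑ θ' : Θ, α γ θ' * s t θ' * v γ θ')) - τ θ * ρ θ + τ θ * s t θ := by
    intro θ
    simp only [hgdef, Vgrad, hexp]
  -- g = -s'
  have key : ∀ θ, g θ = -s' θ := by
    intro θ
    rw [hg θ]
    simp only [hs'def, odeF]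
    rw [show (lam * ∑ γ : Γ, φ γ * (α γ θ * v γ θ * s t θ /
        (ε γ + ∑ θ' : Θ, α γ θ' * s t θ' * v γ θ'))) =
        ∑ γ : Γ, lam * φ γ * α γ θ * s t θ * v γ θ /
        (ε γ + ∑ θ' : Θ, α γ θ' * s t θ' * v γ θ') from by
      rw [Finset.mul_sum]; exact Finset.sum_congr rfl fun γ _ => by ring]
    ring
  -- derivative pieces
  have h1 : ∀ γ, HasDerivAt (fun u => ε γ + ∑ θ : Θ, α γ θ * s u θ * v γ θ)
      (∑ θ : Θ, α γ θ * s' θ * v γ θ) t := fun γ =>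
    HasDerivAt.const_add _
      (HasDerivAt.fun_sum fun θ _ => ((hs' θ).const_mul (α γ θ)).mul_const (v γ θ))
  have h3 : HasDerivAt (fun u => lam * ∑ γ : Γ, φ γ *
      Real.log (ε γ + ∑ θ : Θ, α γ θ * s u θ * v γ θ))
      (lam * ∑ γ : Γ, φ γ * ((∑ θ : Θ, α γ θ * s' θ * v γ θ) /
        (ε γ + ∑ θ : Θ, α γ θ * s t θ * v γ θ))) t :=
    HasDerivAt.const_mul lam
      (HasDerivAt.fun_sum fun γ _ => (((h1 γ).log (hden γ).ne')).const_mul (φ γ))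
  have h4 : HasDerivAt (fun u => ∑ θ : Θ, τ θ * ρ θ * Real.log (s u θ))
      (∑ θ : Θ, τ θ * ρ θ * (s' θ / s t θ)) t :=
    HasDerivAt.fun_sum fun θ _ => (((hs' θ).log (hpos t θ).ne')).const_mul (τ θ * ρ θ)
  have h5 : HasDerivAt (fun u => ∑ θ : Θ, τ θ * s u θ) (∑ θ : Θ, τ θ * s' θ) t :=
    HasDerivAt.fun_sum fun θ _ => (hs' θ).const_mul (τ θ)
  have hF := (h3.sub h4).add h5
  -- the derivative value equals the claimed one
  have hDeq : (-∑ θ : Θ, (1 / s t θ) * (g θ) ^ 2) =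
      (lam * ∑ γ : Γ, φ γ * ((∑ θ : Θ, α γ θ * s' θ * v γ θ) /
        (ε γ + ∑ θ : Θ, α γ θ * s t θ * v γ θ))
      - ∑ θ : Θ, τ θ * ρ θ * (s' θ / s t θ)) + ∑ θ : Θ, τ θ * s' θ := by
    have step1 : (-∑ θ : Θ, (1 / s t θ) * (g θ) ^ 2) =
        ∑ θ : Θ, ((∑ γ : Γ, lam * φ γ * (α γ θ * (s' θ) * v γ θ) /
            (ε γ + ∑ θ' : Θ, α γ θ' * s t θ' * v γ θ'))
          - τ θ * ρ θ * (s' θ / s t θ) + τ θ * s' θ) := by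
      rw [← Finset.sum_neg_distrib]
      refine Finset.sum_congr rfl fun θ _ => ?_
      have hsθ : s t θ ≠ 0 := (hpos t θ).ne'
      have hgθ := hg θ
      rw [key θ] at hgθ
      -- hgθ : -s' θ = (∑ γ, A γ) - τρ + τ s
      have hAsum : ∀ x : ℝ, (∑ γ : Γ, lam * φ γ * (α γ θ * x * v γ θ) /
            (ε γ + ∑ θ' : Θ, α γ θ' * s t θ' * v γ θ')) =
          x / s t θ * ∑ γ : Γ, lam * φ γ * α γ θ * s t θ * v γ θ /
            (ε γ + ∑ θ' : Θ, α γ θ' * s t θ' * v γ θ') := by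
        intro x
        rw [Finset.mul_sum]
        refine Finset.sum_congr rfl fun γ _ => ?_
        field_simp [hsθ, (hden γ).ne']
      rw [hAsum]
      have hs'val : s' θ = -((∑ γ : Γ, lam * φ γ * α γ θ * s t θ * v γ θ /
            (ε γ + ∑ θ' : Θ, α γ θ' * s t θ' * v γ θ')) - τ θ * ρ θ + τ θ * s t θ) := by
        rw [← hgθ]; ring
      rw [key θ, hs'val]
      field_simp
      ring
    rw [step1]
    rw [Finset.sum_add_distrib, Finset.sum_sub_distrib]
    congr 1
    congr 1
    rw [Finset.sum_comm, Finset.mul_sum]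
    refine Finset.sum_congr rfl fun γ _ => ?_
    rw [← Finset.sum_div, show (∑ x : Θ, lam * φ γ * (α γ x * s' x * v γ x)) =
      lam * φ γ * ∑ x : Θ, α γ x * s' x * v γ x from (Finset.mul_sum _ _ _).symm]
    ring
  refine ⟨?_, ?_, ?_⟩
  · simp only [V, hexp]
    rw [hDeq]
    exact hF
  · exact neg_nonpos.mpr (Finset.sum_nonneg fun θ _ =>
      mul_nonneg (one_div_nonneg.mpr (hpos t θ).le) (sq_nonneg _))
  · rw [neg_eq_zero, Finset.sum_eq_zero_iff_of_nonneg fun θ _ =>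
      mul_nonneg (one_div_nonneg.mpr (hpos t θ).le) (sq_nonneg _)]
    constructor
    · intro h θ
      have := h θ (Finset.mem_univ θ)
      rcases mul_eq_zero.mp this with h' | h'
      · exact absurd h' (one_div_ne_zero (hpos t θ).ne')
      · exact (pow_eq_zero_iff two_ne_zero).mp h'
    · intro h θ _
      rw [h θ]; ring
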